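/- For a monotone submodular valuation, in any pure Nash equilibrium the buyer purchases a set of value at least max_i v({i}); consequently, the ratio between the welfare of the best and worst equilibria is at most n. -/

import Mathlib

open Finset

/-- Total price of a bundle `S`. -/
def price {n : ℕ} (p : Fin n → ℝ) (S : Finset (Fin n)) : ℝ := ∑ i ∈ S, p i

/-- Additive valuation induced by item values. -/
def addVal {n : ℕ} (v : Fin n → ℝ) (S : Finset (Fin n)) : ℝ := ∑ i ∈ S, v i

/-- `S` is a utility-maximizing affordable bundle for the budgeted buyer:
it is within budget and has utility `v S - p S` at least that of every other
affordable bundle (unaffordable bundles have utility `-∞`). -/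
def demandOpt {n : ℕ} (v : Finset (Fin n) → ℝ) (B : ℝ) (p : Fin n → ℝ)
    (S : Finset (Fin n)) : Prop :=
  price p S ≤ B ∧ ∀ T : Finset (Fin n), price p T ≤ B → v T - price p T ≤ v S - price p S

/-- Seller `i`'s utility: the posted price if the item is bought, else `0`. -/
def sellerUtil {n : ℕ} (p : Fin n → ℝ) (S : Finset (Fin n)) (i : Fin n) : ℝ :=
  if i ∈ S then p i else 0

/-- `p` is a pure Nash equilibrium of the pricing game with buyer-choice
function `X`: no seller can strictly gain by unilaterally changing
her (nonnegative) price. -/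
def isPNE {n : ℕ} (v : Finset (Fin n) → ℝ) (B : ℝ)
    (X : (Fin n → ℝ) → Finset (Fin n)) (p : Fin n → ℝ) : Prop :=
  ∀ i : Fin n, ∀ q : ℝ, 0 ≤ q →
    sellerUtil (Function.update p i q) (X (Function.update p i q)) i ≤
      sellerUtil p (X p) i

/-- For a monotone submodular valuation, at any PNE the buyer obtains a bundle
of value at least `max_i v({i})`; consequently (since submodularity gives
`v(N) ≤ n · max_i v({i})`) the welfare of any equilibrium is at most `n`
times the welfare of any other, i.e. the best/worst equilibrium welfare
ratio is at most `n`. -/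
theorem stmt19 (n : ℕ) (hn : 1 ≤ n) (v : Finset (Fin n) → ℝ) (B : ℝ) (hB : 0 < B)
    (h0 : v ∅ = 0) (hnn : ∀ S, 0 ≤ v S)
    (hmono : ∀ S T : Finset (Fin n), S ⊆ T → v S ≤ v T)
    (hsub : ∀ S T : Finset (Fin n), v (S ∪ T) + v (S ∩ T) ≤ v S + v T)
    (p : Fin n → ℝ) (hpnn : ∀ i, 0 ≤ p i)
    (X : (Fin n → ℝ) → Finset (Fin n))
    (hX : ∀ q, demandOpt v B q (X q))
    (hPNE : isPNE v B X p) :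
    (∀ i : Fin n, v {i} ≤ v (X p)) ∧
      ∀ (p' : Fin n → ℝ), (∀ i, 0 ≤ p' i) →
        ∀ X' : (Fin n → ℝ) → Finset (Fin n),
          (∀ q, demandOpt v B q (X' q)) → isPNE v B X' p' →
            v (X' p') ≤ (n : ℝ) * v (X p) := by
  -- subadditivity over singletons
  have hsingle : ∀ S : Finset (Fin n), v S ≤ ∑ i ∈ S, v {i} := by
    intro S
    induction S using Finset.induction_on with
    | empty => simp [h0]
    | @insert a S ha ih =>
      have := hsub {a} S
      have hun : {a} ∪ S = insert a S := by
        ext x; simp [Finset.mem_insert, or_comm]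
      have hint : ({a} : Finset (Fin n)) ∩ S = ∅ := by
        ext x; simp; rintro rfl; exact ha
      rw [hun, hint, h0] at this
      rw [Finset.sum_insert ha]
      linarith
  have main : ∀ i : Fin n, v {i} ≤ v (X p) := by
    intro i
    by_cases hi : i ∈ X p
    · exact hmono {i} (X p) (Finset.singleton_subset_iff.2 hi)
    · have key : ∀ q : ℝ, 0 < q → q ≤ B → v {i} ≤ v (X p) + q := by
        intro q hq hqB
        set p' := Function.update p i q with hp'def
        have hdev := hPNE i q hq.le
        have hXp := hX p
        have hXp' := hX p'
        have h0s : sellerUtil p (X p) i = 0 := by simp [sellerUtil, hi]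
        have hiX' : i ∉ X p' := by
          intro hmem
          have : sellerUtil p' (X p') i = q := by
            simp [sellerUtil, hmem, hp'def, Function.update_self]
            exact fun h => absurd hmem h
          rw [this, h0s] at hdev
          linarith
        have hpeq : price p' (X p') = price p (X p') := by
          unfold price
          apply Finset.sum_congr rfl
          intro j hj
          have : j ≠ i := fun h => hiX' (h ▸ hj)
          simp [hp'def, Function.update_of_ne this]
        have haff : price p' {i} ≤ B := by
          simp [price, hp'def, Function.update_self]
          exact hqB
        have hpi : price p' {i} = q := by
          simp [price, hp'def, Function.update_self]
        have h1 := hXp'.2 {i} haff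
        rw [hpi, hpeq] at h1
        have h2 := hXp.2 (X p') (hpeq ▸ hXp'.1)
        have hpn : 0 ≤ price p (X p) :=
          Finset.sum_nonneg fun j _ => hpnn j
        linarith
      apply le_of_forall_pos_le_add
      intro ε hε
      have := key (min ε B) (lt_min hε hB) (min_le_right ε B)
      have h2 := min_le_left ε B
      linarith
  refine ⟨main, ?_⟩
  intro p' hp' X' hX' hPNE'
  have h1 : v (X' p') ≤ v Finset.univ := hmono _ _ (Finset.subset_univ _)
  have h2 := hsingle Finset.univ
  have h3 : ∑ i : Fin n, v {i} ≤ ∑ _i : Fin n, v (X p) :=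
    Finset.sum_le_sum fun i _ => main i
  rw [Finset.sum_const, Finset.card_univ, Fintype.card_fin, nsmul_eq_mul] at h3
  linarith
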